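/- Fix an integer $n \geq 2$, and for $0 \le j \le n-1$ let $s(n-1,j)$ denote the signed Stirling number of the first kind, i.e., the coefficient of $X^j$ in the polynomial $\prod_{i=0}^{n-2}(X - i)$. Then $\sum_{k=1}^{\infty} k^{-n}\left[\binom{k+n-2}{n-2} + \binom{k-1}{n-2}\right] = \sum_{j=0}^{n-1} \frac{(2\pi)^{n-j+1}\,|B_{n-j+1}|}{(n-2)!\,(n-j+1)!}\, s(n-1, j)$, where $B_l$ denotes the $l$-th Bernoulli number. -/

import Mathlib

open Polynomial Finset Real

lemma Zval {t : ℕ} (ht : t ≠ 0) :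
    HasSum (fun k : ℕ => 1 / ((k : ℝ) + 1) ^ (2 * t))
      ((-1 : ℝ) ^ (t + 1) * (2 : ℝ) ^ (2 * t - 1) * π ^ (2 * t) *
        (bernoulli (2 * t) : ℝ) / (Nat.factorial (2 * t))) := by
  have h := hasSum_zeta_nat ht
  have := (hasSum_nat_add_iff' (f := fun n : ℕ => 1 / (n : ℝ) ^ (2 * t)) 1).mpr h
  simp only [Finset.range_one, Finset.sum_singleton, Nat.cast_zero,
    zero_pow (by positivity : 2 * t ≠ 0), div_zero, sub_zero] at this
  convert this using 2 with k
  case e'_3 => rfl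
  push_cast; ring

lemma sumZ {p : ℕ} (hp : 2 ≤ p) : Summable (fun k : ℕ => 1 / ((k : ℝ) + 1) ^ p) := by
  have h := summable_one_div_nat_pow.mpr (by omega : 1 < p)
  have := (summable_nat_add_iff (f := fun n : ℕ => 1 / (n : ℝ) ^ p) 1).mpr h
  refine this.congr fun k => ?_
  push_cast; ring_nf

lemma zeta_even {p : ℕ} (hp : 2 ≤ p) (hpe : Even p) :
    2 * ∑' k : ℕ, 1 / ((k : ℝ) + 1) ^ p
      = (2 * π) ^ p * |((bernoulli p : ℚ) : ℝ)| / (Nat.factorial p) := by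
  obtain ⟨t, rfl⟩ : ∃ t, p = 2 * t := ⟨p / 2, by have := Nat.even_iff.mp hpe; omega⟩
  have ht : t ≠ 0 := by omega
  have h := Zval ht
  have hts := h.tsum_eq
  rw [hts]
  have hfac : (0:ℝ) < (Nat.factorial (2*t) : ℝ) := by positivity
  have hpos : (0:ℝ) < (-1 : ℝ) ^ (t + 1) * (2 : ℝ) ^ (2 * t - 1) * π ^ (2 * t) *
        (bernoulli (2 * t) : ℝ) / (Nat.factorial (2 * t)) := by
    rw [← hts]
    have h1 : (1:ℝ) ≤ ∑' k : ℕ, 1 / ((k : ℝ) + 1) ^ (2*t) := by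
      have := h.summable.le_tsum 0 (fun j _ => by positivity)
      simpa using this
    linarith
  have hX : (0:ℝ) < (-1 : ℝ) ^ (t + 1) * (2 : ℝ) ^ (2 * t - 1) * π ^ (2 * t) *
        (bernoulli (2 * t) : ℝ) := by
    have := mul_pos hpos hfac
    rwa [div_mul_cancel₀ _ (ne_of_gt hfac)] at this
  have hC : (0:ℝ) < (2 : ℝ) ^ (2 * t - 1) * π ^ (2 * t) := by positivity
  have habs : |((bernoulli (2*t) : ℚ) : ℝ)| = (-1 : ℝ) ^ (t + 1) * (bernoulli (2 * t) : ℝ) := by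
    rcases Nat.even_or_odd (t+1) with he | ho
    · rw [he.neg_one_pow] at hX ⊢
      rw [one_mul] at hX ⊢
      exact abs_of_pos (by nlinarith)
    · rw [ho.neg_one_pow] at hX ⊢
      rw [neg_one_mul] at hX ⊢
      rw [abs_of_neg (by nlinarith)]
  rw [habs]
  have h2 : (2:ℝ) ^ (2*t) = 2 * (2:ℝ) ^ (2*t-1) := by
    rw [← pow_succ']
    congr 1; omega
  rw [mul_pow, h2]
  ring

lemma prodB (d k : ℕ) : ∏ i ∈ Finset.range d, ((k:ℝ) - i) = (k.choose d : ℝ) * (Nat.factorial d) := by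
  by_cases hk : k < d
  · rw [Nat.choose_eq_zero_of_lt hk, Finset.prod_eq_zero (Finset.mem_range.mpr hk) (by simp)]
    simp
  · push_neg at hk
    have hc : ∀ i ∈ Finset.range d, ((k:ℝ) - i) = ((k - i : ℕ) : ℝ) := fun i hi => by
      have : i ≤ k := le_trans (le_of_lt (Finset.mem_range.mp hi)) hk
      rw [Nat.cast_sub this]
    rw [Finset.prod_congr rfl hc, ← Nat.cast_prod, ← Nat.descFactorial_eq_prod_range,
      Nat.descFactorial_eq_factorial_mul_choose]
    push_cast; ring

lemma prodA (d k : ℕ) :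
    ∏ i ∈ Finset.range d, ((k:ℝ) + 2 + i) = ((k + d + 1).choose d : ℝ) * (Nat.factorial d) := by
  have h1 : ∏ i ∈ Finset.range d, (k + 2 + i) = (k + d + 1).descFactorial d := by
    rw [Nat.descFactorial_eq_prod_range, ← Finset.prod_range_reflect]
    refine Finset.prod_congr rfl fun i hi => ?_
    have := Finset.mem_range.mp hi; omega
  have h2 : ∏ i ∈ Finset.range d, ((k:ℝ) + 2 + i) = ((∏ i ∈ Finset.range d, (k + 2 + i) : ℕ) : ℝ) := by
    push_cast; rfl
  rw [h2, h1, Nat.descFactorial_eq_factorial_mul_choose]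
  push_cast; ring

theorem series_eq_stirling_bernoulli (n : ℕ) (hn : 2 ≤ n) :
    (∑' k : ℕ,
        (((k + n - 1).choose (n - 2) : ℝ) + ((k).choose (n - 2) : ℝ)) / ((k : ℝ) + 1) ^ n) =
      ∑ j ∈ Finset.range n,
        (2 * Real.pi) ^ (n - j + 1) * |((bernoulli (n - j + 1) : ℚ) : ℝ)| /
            ((Nat.factorial (n - 2) : ℝ) * (Nat.factorial (n - j + 1) : ℝ)) *
          (((∏ i ∈ Finset.range (n - 1), (X - C (i : ℤ))).coeff j : ℤ) : ℝ) := by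
  obtain ⟨d, rfl⟩ : ∃ d, n = d + 2 := ⟨n - 2, by omega⟩
  have e2 : d + 2 - 2 = d := by omega
  have e1 : d + 2 - 1 = d + 1 := by omega
  rw [e2, e1]
  set Q : Polynomial ℝ := ∏ i ∈ Finset.range (d+1), (X - C (i : ℝ)) with hQ
  have hcoeff : ∀ j, (((∏ i ∈ Finset.range (d+1), (X - C (i : ℤ))).coeff j : ℤ) : ℝ)
      = Q.coeff j := by
    intro j
    rw [hQ]
    have hm : (∏ i ∈ Finset.range (d+1), (X - C (i : ℝ)))
        = (∏ i ∈ Finset.range (d+1), (X - C (i : ℤ))).map (Int.castRingHom ℝ) := by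
      rw [Polynomial.map_prod]
      exact Finset.prod_congr rfl fun i _ => by simp
    rw [hm, Polynomial.coeff_map]
    simp
  set c : ℕ → ℝ := fun j => Q.coeff j with hc
  have hdeg : Q.natDegree < d + 2 := by
    rw [hQ, Polynomial.natDegree_prod_of_monic _ _ (fun i _ => monic_X_sub_C _)]
    have h1 : ∀ x : ℕ, ((X : Polynomial ℝ) - (x : Polynomial ℝ)).natDegree = 1 := fun x => by
      rw [← Polynomial.C_eq_natCast]; exact Polynomial.natDegree_X_sub_C _
    simp [h1]
  have key1 : ∀ x : ℝ, ∑ j ∈ Finset.range (d+2), c j * x ^ j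
      = ∏ i ∈ Finset.range (d+1), (x - i) := by
    intro x
    rw [← Polynomial.eval_eq_sum_range' hdeg x, hQ]
    simp [Polynomial.eval_prod]
  have hterm : ∀ k : ℕ,
      (((k + (d + 2) - 1).choose d : ℝ) + (k.choose d : ℝ)) / ((k : ℝ) + 1) ^ (d + 2)
        = ∑ j ∈ Finset.range (d + 2),
            (c j * (1 + (-1 : ℝ) ^ (d + 1 + j)) / (Nat.factorial d : ℝ)) *
              (1 / ((k : ℝ) + 1) ^ (d + 3 - j)) := by
    intro k
    have hk1 : k + (d + 2) - 1 = k + d + 1 := by omega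
    rw [hk1]
    set m : ℝ := (k : ℝ) + 1 with hm
    have hm0 : (0 : ℝ) < m := by positivity
    have hfd : (0 : ℝ) < (Nat.factorial d : ℝ) := by positivity
    have hS : ∑ j ∈ Finset.range (d + 2), c j * (1 + (-1 : ℝ) ^ (d + 1 + j)) * m ^ j
        = m * (Nat.factorial d : ℝ) * (((k + d + 1).choose d : ℝ) + (k.choose d : ℝ)) := by
      have hsplit : ∀ j ∈ Finset.range (d + 2),
          c j * (1 + (-1 : ℝ) ^ (d + 1 + j)) * m ^ j
            = c j * m ^ j + (-1 : ℝ) ^ (d + 1) * (c j * (-m) ^ j) := fun j _ => by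
        rw [pow_add, neg_pow m j]; ring
      rw [Finset.sum_congr rfl hsplit, Finset.sum_add_distrib, ← Finset.mul_sum,
        key1 m, key1 (-m)]
      have hP1 : ∏ i ∈ Finset.range (d + 1), (m - (i : ℝ))
          = ((k.choose d : ℝ) * (Nat.factorial d : ℝ)) * m := by
        rw [Finset.prod_range_succ']
        have : ∀ i ∈ Finset.range d, (m - ((i + 1 : ℕ) : ℝ)) = ((k : ℝ) - i) := fun i _ => by
          push_cast [hm]; ring
        rw [Finset.prod_congr rfl this, prodB]
        push_cast [hm]; ring
      have hP2 : ∏ i ∈ Finset.range (d + 1), (-m - (i : ℝ))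
          = (-1 : ℝ) ^ (d + 1) * ((((k + d + 1).choose d : ℝ) * (Nat.factorial d : ℝ)) * m) := by
        have h1 : ∀ i ∈ Finset.range (d + 1), (-m - (i : ℝ)) = (-1) * (m + i) := fun i _ => by ring
        rw [Finset.prod_congr rfl h1, Finset.prod_mul_distrib, Finset.prod_const,
          Finset.card_range, Finset.prod_range_succ']
        have h2 : ∀ i ∈ Finset.range d, (m + ((i + 1 : ℕ) : ℝ)) = ((k : ℝ) + 2 + i) := fun i _ => by
          push_cast [hm]; ring
        rw [Finset.prod_congr rfl h2, prodA]
        push_cast [hm]; ring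
      rw [hP1, hP2]
      have h3 : (-1 : ℝ) ^ (d + 1) * (-1 : ℝ) ^ (d + 1) = 1 := by
        rw [← pow_add]
        exact Even.neg_one_pow ⟨d + 1, by ring⟩
      linear_combination (((k + d + 1).choose d : ℝ) * (Nat.factorial d : ℝ) * m) * h3
    have hper : ∀ j ∈ Finset.range (d + 2),
        (c j * (1 + (-1 : ℝ) ^ (d + 1 + j)) / (Nat.factorial d : ℝ)) *
              (1 / m ^ (d + 3 - j))
          = (c j * (1 + (-1 : ℝ) ^ (d + 1 + j)) * m ^ j)
              / ((Nat.factorial d : ℝ) * m ^ (d + 3)) := by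
      intro j hj
      have hj' := Finset.mem_range.mp hj
      have h1 : (1 : ℝ) / m ^ (d + 3 - j) = m ^ j / m ^ (d + 3) := by
        rw [div_eq_div_iff (by positivity) (by positivity), one_mul, ← pow_add]
        congr 1; omega
      rw [h1, div_mul_div_comm]
    rw [Finset.sum_congr rfl hper, ← Finset.sum_div, hS,
      div_eq_div_iff (by positivity) (by positivity), pow_succ]
    ring
  rw [tsum_congr hterm, Summable.tsum_finsetSum (fun j hj => Summable.mul_left _
    (sumZ (show 2 ≤ d + 3 - j by have := Finset.mem_range.mp hj; omega)))]
  refine Finset.sum_congr rfl fun j hj => ?_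
  have hj' := Finset.mem_range.mp hj
  rw [tsum_mul_left, hcoeff j]
  have hpj : d + 2 - j + 1 = d + 3 - j := by omega
  rw [hpj]
  have hp2 : 2 ≤ d + 3 - j := by omega
  rcases Nat.even_or_odd (d + 3 - j) with hpe | hpo
  · have hde : Even (d + 1 + j) := by
      rw [Nat.even_iff] at hpe ⊢; omega
    rw [hde.neg_one_pow]
    have hz := zeta_even hp2 hpe
    show (Q.coeff j * (1 + 1) / (Nat.factorial d : ℝ)) * _ = _
    linear_combination (Q.coeff j / (Nat.factorial d : ℝ)) * hz
  · have hdo : Odd (d + 1 + j) := by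
      rw [Nat.odd_iff] at hpo ⊢; omega
    have hb : _root_.bernoulli (d + 3 - j) = 0 := by
      rw [bernoulli_eq_bernoulli'_of_ne_one (by omega)]
      exact bernoulli'_eq_zero_of_odd hpo (by omega)
    rw [hdo.neg_one_pow, hb]
    norm_num
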